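/- Let f ∈ SD²_{d−1}(0+) with d ∈ (0,1) and define f_δ(t,v) = f(t+δ, t+δ−δv) / f(t+δ, t) for t ∈ [0,1], v ∈ [0,1], δ > 0. Then lim_{δ↓0} sup_{0 ≤ t ≤ 1} | ∫₀¹ f_δ(t,v) dv − 1/d | = 0 and lim_{δ↓0} sup_{0 ≤ t ≤ 1} | ∫₀¹ |f_δ(t,v)| dv − 1/d | = 0. -/

import Mathlib

open MeasureTheory ProbabilityTheory Filter Set intervalIntegral Real
open Topology

/-- `p01 F t r = ∂F/∂r (t,r)` -/
noncomputable def p01 (F : ℝ → ℝ → ℝ) (t r : ℝ) : ℝ := deriv (fun x => F t x) r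
/-- `p10 F t r = ∂F/∂t (t,r)` -/
noncomputable def p10 (F : ℝ → ℝ → ℝ) (t r : ℝ) : ℝ := deriv (fun x => F x r) t
/-- `p11 F t r = ∂²F/∂t∂r (t,r)` -/
noncomputable def p11 (F : ℝ → ℝ → ℝ) (t r : ℝ) : ℝ := deriv (fun x => p01 F x r) t
/-- `p02 F t r = ∂²F/∂r² (t,r)` -/
noncomputable def p02 (F : ℝ → ℝ → ℝ) (t r : ℝ) : ℝ := deriv (fun x => p01 F t x) r

/-- `lim_{h↓0} sup_{t∈K} |G h t + c| = 0` for every compact `K ⊂ ℝ`. -/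
def UnifDiagLimit (G : ℝ → ℝ → ℝ) (c : ℝ) : Prop :=
  ∀ K : Set ℝ, IsCompact K → ∀ ε > 0, ∃ h₀ > 0, ∀ h : ℝ, 0 < h → h < h₀ →
    ∀ t ∈ K, |G h t + c| < ε

/-- `F ∈ SR²_ρ(0+)` : a function of smooth variation of index `ρ` at the diagonal. -/
def SmoothVar (F : ℝ → ℝ → ℝ) (ρ : ℝ) : Prop :=
  ContinuousOn (fun p : ℝ × ℝ => F p.1 p.2) {p : ℝ × ℝ | p.2 ≤ p.1} ∧
  ContDiffOn ℝ 2 (fun p : ℝ × ℝ => F p.1 p.2) {p : ℝ × ℝ | p.2 < p.1} ∧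
  (∀ t r : ℝ, r < t → 0 < F t r) ∧
  UnifDiagLimit (fun h t => h * p01 F t (t - h) / F t (t - h)) ρ ∧
  UnifDiagLimit (fun h t => h * p10 F (t + h) t / F (t + h) t) (-ρ) ∧
  UnifDiagLimit (fun h t => h ^ 2 * p11 F t (t - h) / F t (t - h)) (ρ * (ρ - 1)) ∧
  UnifDiagLimit (fun h t => h ^ 2 * p02 F t (t - h) / F t (t - h)) (-(ρ * (ρ - 1)))

/-- Lemma 6: for `f ∈ SD²_{d−1}(0+)` and
`f_δ(t,v) = f(t+δ,t+δ−δv)/f(t+δ,t)`,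
`lim_{δ↓0} sup_{t∈[0,1]} |∫₀¹ f_δ(t,v) dv − 1/d| = 0` and
`lim_{δ↓0} sup_{t∈[0,1]} |∫₀¹ |f_δ(t,v)| dv − 1/d| = 0`. -/
private lemma l1 {F : ℝ → ℝ → ℝ}
    (hD : ContDiffOn ℝ 2 (fun p : ℝ × ℝ => F p.1 p.2) {p : ℝ × ℝ | p.2 < p.1})
    {t r : ℝ} (h : r < t) : HasDerivAt (fun x => F t x) (p01 F t r) r := by
  have hU : IsOpen {p : ℝ × ℝ | p.2 < p.1} := isOpen_lt continuous_snd continuous_fst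
  have h1 : DifferentiableAt ℝ (fun p : ℝ × ℝ => F p.1 p.2) (t, r) :=
    (hD.contDiffAt (hU.mem_nhds h)).differentiableAt two_ne_zero
  have h2 : DifferentiableAt ℝ (fun x : ℝ => ((t : ℝ), x)) r :=
    (differentiableAt_const t).prodMk differentiableAt_id
  exact (h1.comp r h2).hasDerivAt

private lemma l2 {F : ℝ → ℝ → ℝ}
    (hD : ContDiffOn ℝ 2 (fun p : ℝ × ℝ => F p.1 p.2) {p : ℝ × ℝ | p.2 < p.1}) :
    ContinuousOn (fun p : ℝ × ℝ => p01 F p.1 p.2) {p : ℝ × ℝ | p.2 < p.1} := by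
  have hU : IsOpen {p : ℝ × ℝ | p.2 < p.1} := isOpen_lt continuous_snd continuous_fst
  have hfd : ContinuousOn (fun p => fderiv ℝ (fun p : ℝ × ℝ => F p.1 p.2) p)
      {p : ℝ × ℝ | p.2 < p.1} := hD.continuousOn_fderiv_of_isOpen hU one_le_two
  have key : ∀ p ∈ {p : ℝ × ℝ | p.2 < p.1},
      p01 F p.1 p.2 = fderiv ℝ (fun p : ℝ × ℝ => F p.1 p.2) p ((0:ℝ), (1:ℝ)) := by
    intro p hp
    have h1 : HasFDerivAt (fun p : ℝ × ℝ => F p.1 p.2)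
        (fderiv ℝ (fun p : ℝ × ℝ => F p.1 p.2) p) p :=
      ((hD.contDiffAt (hU.mem_nhds hp)).differentiableAt two_ne_zero).hasFDerivAt
    have h2 : HasDerivAt (fun x : ℝ => ((p.1 : ℝ), x)) (((0:ℝ), (1:ℝ)) : ℝ × ℝ) p.2 :=
      (hasDerivAt_const _ _).prodMk (hasDerivAt_id _)
    have h3 := h1.comp_hasDerivAt p.2 h2
    exact h3.deriv
  refine (ContinuousOn.congr ?_ key)
  exact (ContinuousLinearMap.apply ℝ ℝ (((0:ℝ), (1:ℝ)) : ℝ × ℝ)).continuous.comp_continuousOn hfd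

private lemma core (d : ℝ) (hd0 : 0 < d) (hd1 : d < 1)
    (F : ℝ → ℝ → ℝ)
    (hC : ContinuousOn (fun p : ℝ × ℝ => F p.1 p.2) {p : ℝ × ℝ | p.2 ≤ p.1})
    (hD : ContDiffOn ℝ 2 (fun p : ℝ × ℝ => F p.1 p.2) {p : ℝ × ℝ | p.2 < p.1})
    (hpos : ∀ t r : ℝ, r < t → 0 < F t r)
    (h₀ : ℝ) (hh₀ : 0 < h₀)
    (hsmall : ∀ h : ℝ, 0 < h → h < h₀ → ∀ t ∈ Set.Icc (0:ℝ) 2,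
      |h * p01 F t (t - h) / F t (t - h) + d| < d / 2)
    (δ t : ℝ) (hδ0 : 0 < δ) (hδ1 : δ < h₀) (hδ2 : δ < 1) (ht : t ∈ Set.Icc (0:ℝ) 1) :
    (∫ v in (0:ℝ)..1, p01 F (t + δ) (t + δ - δ * v)) = -F (t + δ) t / δ ∧
    (∀ v : ℝ, 0 < v → v ≤ 1 → p01 F (t + δ) (t + δ - δ * v) < 0) := by
  obtain ⟨ht0, ht1⟩ := ht
  set τ := t + δ with hτdef
  have hτ0 : 0 ≤ τ := by simp only [hτdef]; linarith
  have hτ2 : τ ≤ 2 := by simp only [hτdef]; linarith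
  -- sign and size estimates near the diagonal
  have sign : ∀ h : ℝ, 0 < h → h ≤ δ →
      p01 F τ (τ - h) < 0 ∧ d / 2 * F τ (τ - h) ≤ -(h * p01 F τ (τ - h)) ∧
      -(h * p01 F τ (τ - h)) ≤ 3 * (d / 2) * F τ (τ - h) := by
    intro h hh hle
    have hFpos : 0 < F τ (τ - h) := hpos τ (τ - h) (by linarith)
    have habs := abs_lt.mp (hsmall h hh (lt_of_le_of_lt hle hδ1) τ ⟨hτ0, hτ2⟩)
    have h1 : h * p01 F τ (τ - h) / F τ (τ - h) < -(d / 2) := by linarith [habs.2]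
    have h2 : -(3 * (d / 2)) < h * p01 F τ (τ - h) / F τ (τ - h) := by linarith [habs.1]
    have h1' : h * p01 F τ (τ - h) < -(d / 2) * F τ (τ - h) := (div_lt_iff₀ hFpos).mp h1
    have h2' : -(3 * (d / 2)) * F τ (τ - h) < h * p01 F τ (τ - h) := (lt_div_iff₀ hFpos).mp h2
    refine ⟨?_, by linarith, by linarith⟩
    nlinarith
  -- derivative of h ↦ F τ (τ - h)
  have hφ : ∀ h : ℝ, 0 < h → HasDerivAt (fun x : ℝ => F τ (τ - x)) (-(p01 F τ (τ - h))) h := by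
    intro h hh
    have hin : HasDerivAt (fun x : ℝ => τ - x) (-1) h := (hasDerivAt_id h).const_sub τ
    have := (l1 hD (show τ - h < τ by linarith)).comp h hin
    have e : -(p01 F τ (τ - h)) = p01 F τ (τ - h) * -1 := by ring
    rw [e]; exact this
  -- monotone bound : F τ (τ - δ*v) ≤ F τ (τ - δ) * v ^ (d/2)
  have monoF : ∀ v : ℝ, 0 < v → v ≤ 1 → F τ (τ - δ * v) ≤ F τ (τ - δ) * v ^ (d / 2) := by
    intro v hv0 hv1
    have hδv : 0 < δ * v := by positivity
    have hδvδ : δ * v ≤ δ := by nlinarith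
    have hψ : ∀ h : ℝ, 0 < h → HasDerivAt (fun x : ℝ => F τ (τ - x) * x ^ (-(d / 2)))
        ((-(p01 F τ (τ - h))) * h ^ (-(d / 2)) + F τ (τ - h) * (-(d / 2) * h ^ (-(d / 2) - 1))) h := by
      intro h hh
      exact (hφ h hh).mul (Real.hasDerivAt_rpow_const (Or.inl (ne_of_gt hh)))
    have hψcont : ContinuousOn (fun h : ℝ => F τ (τ - h) * h ^ (-(d / 2))) (Icc (δ * v) δ) := by
      apply ContinuousOn.mul
      · have hg : ContinuousOn (fun h : ℝ => ((τ : ℝ), τ - h)) (Icc (δ * v) δ) :=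
          (continuous_const.prodMk (continuous_const.sub continuous_id)).continuousOn
        exact hC.comp hg fun h hh => show τ - h ≤ τ by linarith [hh.1]
      · exact continuousOn_id.rpow_const fun h hh => Or.inl (ne_of_gt (lt_of_lt_of_le hδv hh.1))
    have hmono : MonotoneOn (fun h : ℝ => F τ (τ - h) * h ^ (-(d / 2))) (Icc (δ * v) δ) := by
      apply monotoneOn_of_deriv_nonneg (convex_Icc _ _) hψcont
      · intro x hx
        rw [interior_Icc] at hx
        exact ((hψ x (lt_trans hδv hx.1)).differentiableAt).differentiableWithinAt
      · intro x hx
        rw [interior_Icc] at hx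
        have hx0 : 0 < x := lt_trans hδv hx.1
        rw [(hψ x hx0).deriv]
        have e : x ^ (-(d / 2) - 1) * x = x ^ (-(d / 2)) := by
          rw [← Real.rpow_add_one (ne_of_gt hx0)]; norm_num
        have hpos' : (0:ℝ) < x ^ (-(d / 2) - 1) := Real.rpow_pos_of_pos hx0 _
        have hkey : 0 ≤ (-(p01 F τ (τ - x))) * x - d / 2 * F τ (τ - x) := by
          have := (sign x hx0 (le_of_lt hx.2)).2.1
          nlinarith
        calc (0:ℝ) ≤ x ^ (-(d / 2) - 1) * ((-(p01 F τ (τ - x))) * x - d / 2 * F τ (τ - x)) :=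
              mul_nonneg hpos'.le hkey
          _ = (-(p01 F τ (τ - x))) * x ^ (-(d / 2)) + F τ (τ - x) * (-(d / 2) * x ^ (-(d / 2) - 1)) := by
              rw [← e]; ring
    have h1 := hmono (Set.mem_Icc.mpr ⟨le_rfl, hδvδ⟩) (Set.mem_Icc.mpr ⟨hδvδ, le_rfl⟩) hδvδ
    simp only at h1
    have hc1 : (0:ℝ) < (δ * v) ^ (d / 2) := Real.rpow_pos_of_pos hδv _
    have hc2 : (0:ℝ) < (δ:ℝ) ^ (d / 2) := Real.rpow_pos_of_pos hδ0 _
    rw [Real.rpow_neg hδv.le, Real.rpow_neg hδ0.le] at h1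
    have hsplit : (δ * v) ^ (d / 2) = (δ:ℝ) ^ (d / 2) * v ^ (d / 2) :=
      Real.mul_rpow hδ0.le hv0.le
    calc F τ (τ - δ * v) = F τ (τ - δ * v) * ((δ * v) ^ (d / 2))⁻¹ * (δ * v) ^ (d / 2) := by
          field_simp
      _ ≤ F τ (τ - δ) * ((δ:ℝ) ^ (d / 2))⁻¹ * (δ * v) ^ (d / 2) :=
          mul_le_mul_of_nonneg_right h1 hc1.le
      _ = F τ (τ - δ) * v ^ (d / 2) := by rw [hsplit]; field_simp
  -- F τ τ = 0
  have hdiag : F τ τ = 0 := by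
    have hmem : ((τ, τ) : ℝ × ℝ) ∈ {p : ℝ × ℝ | p.2 ≤ p.1} := by simp
    have hg : Tendsto (fun v : ℝ => ((τ : ℝ), τ - δ * v)) (𝓝[>] 0) (nhdsWithin ((τ, τ) : ℝ × ℝ) {p : ℝ × ℝ | p.2 ≤ p.1}) := by
      apply tendsto_nhdsWithin_of_tendsto_nhds_of_eventually_within
      · have : Tendsto (fun v : ℝ => ((τ : ℝ), τ - δ * v)) (𝓝 0) (𝓝 (τ, τ - δ * 0)) :=
          (continuous_const.prodMk (continuous_const.sub (continuous_const.mul continuous_id))).tendsto 0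
        simpa using this.mono_left nhdsWithin_le_nhds
      · refine eventually_nhdsWithin_of_forall fun v hv => ?_
        have : (0:ℝ) < v := hv
        show τ - δ * v ≤ τ
        nlinarith
    have h1 : Tendsto (fun v : ℝ => F τ (τ - δ * v)) (𝓝[>] 0) (𝓝 (F τ τ)) :=
      ((hC ((τ, τ) : ℝ × ℝ) hmem).tendsto).comp hg
    have h2 : Tendsto (fun v : ℝ => F τ (τ - δ * v)) (𝓝[>] 0) (𝓝 0) := by
      have hub : Tendsto (fun v : ℝ => F τ (τ - δ) * v ^ (d / 2)) (𝓝[>] 0) (𝓝 0) := by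
        have hr : Tendsto (fun v : ℝ => v ^ (d / 2)) (𝓝 0) (𝓝 ((0:ℝ) ^ (d / 2))) :=
          (Real.continuousAt_rpow_const 0 (d / 2) (Or.inr (by positivity))).tendsto
        rw [Real.zero_rpow (by positivity)] at hr
        have h3 : Tendsto (fun v : ℝ => v ^ (d / 2)) (𝓝[>] (0:ℝ)) (𝓝 0) :=
          hr.mono_left nhdsWithin_le_nhds
        simpa using h3.const_mul (F τ (τ - δ))
      apply tendsto_of_tendsto_of_tendsto_of_le_of_le' tendsto_const_nhds hub
      · refine eventually_nhdsWithin_of_forall fun v hv => ?_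
        exact (hpos τ (τ - δ * v) (by nlinarith [show (0:ℝ) < v from hv])).le
      · filter_upwards [Ioc_mem_nhdsGT_of_mem (show (0:ℝ) ∈ Ico (0:ℝ) 1 by simp)] with v hv
        exact monoF v hv.1 hv.2
    exact tendsto_nhds_unique h1 h2
  -- integrability
  have hint : IntervalIntegrable (fun v : ℝ => p01 F τ (τ - δ * v)) volume 0 1 := by
    rw [intervalIntegrable_iff_integrableOn_Ioc_of_le zero_le_one]
    have hmeas : AEStronglyMeasurable (fun v : ℝ => p01 F τ (τ - δ * v)) (volume.restrict (Ioc 0 1)) := by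
      have hcont : ContinuousOn (fun v : ℝ => p01 F τ (τ - δ * v)) (Ioc 0 1) := by
        have hg : ContinuousOn (fun v : ℝ => ((τ : ℝ), τ - δ * v)) (Ioc 0 1) :=
          (continuous_const.prodMk (continuous_const.sub (continuous_const.mul continuous_id))).continuousOn
        exact (l2 hD).comp hg fun v hv => show τ - δ * v < τ by nlinarith [hv.1]
      exact hcont.aestronglyMeasurable measurableSet_Ioc
    have hgint : IntegrableOn (fun v : ℝ => 3 * (d / 2) * F τ (τ - δ) / δ * v ^ (d / 2 - 1)) (Ioc 0 1) := by
      have := (intervalIntegrable_rpow' (show (-1:ℝ) < d / 2 - 1 by linarith) (a := 0) (b := 1)).const_mul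
        (3 * (d / 2) * F τ (τ - δ) / δ)
      rwa [intervalIntegrable_iff_integrableOn_Ioc_of_le zero_le_one] at this
    apply hgint.integrable.mono' hmeas
    rw [ae_restrict_iff' measurableSet_Ioc]
    refine Filter.Eventually.of_forall fun v hv => ?_
    obtain ⟨hv0, hv1⟩ := hv
    have hδv : 0 < δ * v := by positivity
    obtain ⟨hs1, hs2, hs3⟩ := sign (δ * v) hδv (by nlinarith)
    have hm := monoF v hv0 hv1
    have hFd : 0 < F τ (τ - δ) := hpos τ (τ - δ) (by linarith)
    rw [Real.norm_eq_abs, abs_of_neg hs1, Real.rpow_sub hv0, Real.rpow_one]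
    have hkey : -(p01 F τ (τ - δ * v)) * (δ * v) ≤ 3 * (d / 2) * (F τ (τ - δ) * v ^ (d / 2)) := by
      have : 3 * (d / 2) * F τ (τ - δ * v) ≤ 3 * (d / 2) * (F τ (τ - δ) * v ^ (d / 2)) := by
        apply mul_le_mul_of_nonneg_left hm (by positivity)
      nlinarith
    have h2 : 3 * (d / 2) * F τ (τ - δ) / δ * (v ^ (d / 2) / v) =
        3 * (d / 2) * (F τ (τ - δ) * v ^ (d / 2)) / (δ * v) := by
      field_simp
    rw [h2, le_div_iff₀ (by positivity)]
    linarith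
  -- FTC
  have hGcont : ContinuousOn (fun v : ℝ => -F τ (τ - δ * v) / δ) (Icc 0 1) := by
    apply ContinuousOn.div_const
    apply ContinuousOn.neg
    have hg : ContinuousOn (fun v : ℝ => ((τ : ℝ), τ - δ * v)) (Icc 0 1) :=
      (continuous_const.prodMk (continuous_const.sub (continuous_const.mul continuous_id))).continuousOn
    exact hC.comp hg fun v hv => show τ - δ * v ≤ τ by nlinarith [hv.1]
  have hderiv : ∀ v ∈ Ioo (0:ℝ) 1,
      HasDerivWithinAt (fun v : ℝ => -F τ (τ - δ * v) / δ) (p01 F τ (τ - δ * v)) (Ioi v) v := by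
    intro v hv
    have hδv : 0 < δ * v := by nlinarith [hv.1]
    have hin : HasDerivAt (fun y : ℝ => τ - δ * y) (-(δ * 1)) v :=
      ((hasDerivAt_id v).const_mul δ).const_sub τ
    have h1 := ((l1 hD (show τ - δ * v < τ by linarith)).comp v hin).neg.div_const δ
    have h2 : -(p01 F τ (τ - δ * v) * -(δ * 1)) / δ = p01 F τ (τ - δ * v) := by
      field_simp
    rw [h2] at h1
    exact h1.hasDerivWithinAt
  have hFTC := intervalIntegral.integral_eq_sub_of_hasDeriv_right_of_le zero_le_one hGcont hderiv hint
  rw [mul_one, mul_zero, sub_zero, hdiag] at hFTC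
  constructor
  · rw [hFTC, show τ - δ = t by rw [hτdef]; ring]
    ring
  · intro v hv0 hv1
    exact (sign (δ * v) (by positivity) (by nlinarith)).1

theorem lemma6 (d : ℝ) (hd : d ∈ Set.Ioo (0:ℝ) 1)
    (F : ℝ → ℝ → ℝ) (hF : SmoothVar F d)
    (f : ℝ → ℝ → ℝ) (hf : ∀ t r : ℝ, f t r = p01 F t r) :
    (∀ ε > (0:ℝ), ∃ δ₀ > (0:ℝ), ∀ δ : ℝ, 0 < δ → δ < δ₀ → ∀ t ∈ Set.Icc (0:ℝ) 1,
      |(∫ v in (0:ℝ)..1, f (t + δ) (t + δ - δ * v) / f (t + δ) t) - 1 / d| < ε) ∧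
    (∀ ε > (0:ℝ), ∃ δ₀ > (0:ℝ), ∀ δ : ℝ, 0 < δ → δ < δ₀ → ∀ t ∈ Set.Icc (0:ℝ) 1,
      |(∫ v in (0:ℝ)..1, |f (t + δ) (t + δ - δ * v) / f (t + δ) t|) - 1 / d| < ε) := by
  obtain ⟨hd0, hd1⟩ := hd
  obtain ⟨hC, hD, hpos, h01, -⟩ := hF
  have main : ∀ ε > (0:ℝ), ∃ δ₀ > (0:ℝ), ∀ δ : ℝ, 0 < δ → δ < δ₀ → ∀ t ∈ Set.Icc (0:ℝ) 1,
      |(∫ v in (0:ℝ)..1, f (t + δ) (t + δ - δ * v) / f (t + δ) t) - 1 / d| < ε ∧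
      |(∫ v in (0:ℝ)..1, |f (t + δ) (t + δ - δ * v) / f (t + δ) t|) - 1 / d| < ε := by
    intro ε hε
    obtain ⟨h₁, h₁0, hh₁⟩ := h01 (Set.Icc 0 2) isCompact_Icc (min (d / 2) (ε * d ^ 2 / 4))
      (lt_min (by linarith) (by positivity))
    refine ⟨min h₁ 1, lt_min h₁0 one_pos, fun δ hδ0 hδδ₀ t ht => ?_⟩
    have hδ1 : δ < h₁ := lt_of_lt_of_le hδδ₀ (min_le_left _ _)
    have hδ2 : δ < 1 := lt_of_lt_of_le hδδ₀ (min_le_right _ _)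
    have hsmall : ∀ h : ℝ, 0 < h → h < h₁ → ∀ s ∈ Set.Icc (0:ℝ) 2,
        |h * p01 F s (s - h) / F s (s - h) + d| < d / 2 := by
      intro h hh hlt s hs
      have h5 := hh₁ h hh hlt s hs
      simp only at h5
      exact lt_of_lt_of_le h5 (min_le_left _ _)
    obtain ⟨hval, hsign⟩ := core d hd0 hd1 F hC hD hpos h₁ h₁0 hsmall δ t hδ0 hδ1 hδ2 ht
    have hτlt : t < t + δ := by linarith
    have hA : 0 < F (t + δ) t := hpos _ _ hτlt
    have hB : p01 F (t + δ) t < 0 := by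
      have h6 := hsign 1 one_pos le_rfl
      rwa [show t + δ - δ * 1 = t by ring] at h6
    have hRd : |δ * p01 F (t + δ) t / F (t + δ) t + d| < min (d / 2) (ε * d ^ 2 / 4) := by
      have h7 := hh₁ δ hδ0 hδ1 (t + δ) ⟨by linarith [ht.1], by linarith [ht.2]⟩
      simp only at h7
      rwa [show t + δ - δ = t by ring] at h7
    set R := δ * p01 F (t + δ) t / F (t + δ) t with hRdef
    have hRd' : |R + d| < min (d / 2) (ε * d ^ 2 / 4) := hRd
    have hR : R < -(d / 2) := by
      have h1 := (abs_lt.mp hRd').2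
      have h2 : min (d / 2) (ε * d ^ 2 / 4) ≤ d / 2 := min_le_left _ _
      linarith
    have hδne : δ ≠ 0 := ne_of_gt hδ0
    have hAne : F (t + δ) t ≠ 0 := ne_of_gt hA
    have hBne : p01 F (t + δ) t ≠ 0 := ne_of_lt hB
    have hdne : d ≠ 0 := ne_of_gt hd0
    have hI : (∫ v in (0:ℝ)..1, f (t + δ) (t + δ - δ * v) / f (t + δ) t)
        = -F (t + δ) t / δ / p01 F (t + δ) t := by
      simp only [hf]
      rw [intervalIntegral.integral_div, hval]
    have heq : -F (t + δ) t / δ / p01 F (t + δ) t - 1 / d = -(R + d) / (R * d) := by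
      rw [hRdef]
      field_simp
      ring
    have hest : |(-F (t + δ) t / δ / p01 F (t + δ) t) - 1 / d| < ε := by
      rw [heq, abs_div, abs_neg, abs_mul, abs_of_pos hd0,
        div_lt_iff₀ (by positivity : (0:ℝ) < |R| * d)]
      have hRabs : d / 2 ≤ |R| := by
        rw [abs_of_neg (by linarith : R < 0)]; linarith
      have h3 : min (d / 2) (ε * d ^ 2 / 4) ≤ ε * d ^ 2 / 4 := min_le_right _ _
      have h5 : ε * (d / 2) ≤ ε * |R| := mul_le_mul_of_nonneg_left hRabs hε.le
      have h6 : ε * (d / 2) * d ≤ ε * |R| * d := mul_le_mul_of_nonneg_right h5 hd0.le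
      nlinarith [abs_nonneg (R + d)]
    refine ⟨by rw [hI]; exact hest, ?_⟩
    have habs_eq : (∫ v in (0:ℝ)..1, |f (t + δ) (t + δ - δ * v) / f (t + δ) t|)
        = ∫ v in (0:ℝ)..1, f (t + δ) (t + δ - δ * v) / f (t + δ) t := by
      apply intervalIntegral.integral_congr_ae
      refine Filter.Eventually.of_forall fun v hv => ?_
      rw [Set.uIoc_of_le zero_le_one] at hv
      have hnum : f (t + δ) (t + δ - δ * v) < 0 := by rw [hf]; exact hsign v hv.1 hv.2
      have hden : f (t + δ) t < 0 := by rw [hf]; exact hB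
      have : (0:ℝ) ≤ f (t + δ) (t + δ - δ * v) / f (t + δ) t := by
        rw [div_nonneg_iff]; right; exact ⟨hnum.le, hden.le⟩
      exact abs_of_nonneg this
    rw [habs_eq, hI]; exact hest
  refine ⟨fun ε hε => ?_, fun ε hε => ?_⟩
  · obtain ⟨δ₀, hδ₀, hmain⟩ := main ε hε
    exact ⟨δ₀, hδ₀, fun δ h1 h2 t ht => (hmain δ h1 h2 t ht).1⟩
  · obtain ⟨δ₀, hδ₀, hmain⟩ := main ε hε
    exact ⟨δ₀, hδ₀, fun δ h1 h2 t ht => (hmain δ h1 h2 t ht).2⟩
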